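/- There exists a constant $C>0$ such that for all complex numbers $z$, the analytic continuation of the standard normal distribution function satisfies $|\Phi(z)| \le C\,\max\{1, e^{-\Re(z^2)/2}\}$. -/

import Mathlib

open scoped Real
open Complex MeasureTheory Filter Topology intervalIntegral

/-- The analytic continuation of the standard normal distribution function,
`Φ(z) = 1/2 + (2π)^{-1/2} ∑ₙ (-1)ⁿ z^{2n+1} / ((2n+1) 2ⁿ n!)`. -/
noncomputable def PhiC (z : ℂ) : ℂ :=
  1 / 2 + (Real.sqrt (2 * π) : ℂ)⁻¹ *
    ∑' n : ℕ, ((-1 : ℂ) ^ n / (((2 * n + 1 : ℕ) : ℂ) * 2 ^ n * (n.factorial : ℂ)))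
      * z ^ (2 * n + 1)

noncomputable def gC (z : ℂ) : ℂ := (Real.sqrt (2 * π) : ℂ)⁻¹ * Complex.exp (-z ^ 2 / 2)

lemma gC_cont : Continuous gC := by
  unfold gC; fun_prop

lemma tsum_gprime (z : ℂ) :
    ∑' n : ℕ, ((-1 : ℂ) ^ n / (2 ^ n * (n.factorial : ℂ))) * z ^ (2 * n)
      = Complex.exp (-z ^ 2 / 2) := by
  rw [Complex.exp_eq_exp_ℂ, NormedSpace.exp_eq_tsum_div]
  congr 1
  ext n
  have h2 : ((2 : ℂ)) ^ n ≠ 0 := pow_ne_zero _ two_ne_zero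
  have hf : ((n.factorial : ℂ)) ≠ 0 := Nat.cast_ne_zero.2 n.factorial_ne_zero
  rw [show (-z ^ 2 / 2 : ℂ) = (-1) * (z ^ 2 / 2) by ring, mul_pow, div_pow, pow_mul]
  field_simp

lemma hasDerivAt_PhiC (z : ℂ) : HasDerivAt PhiC (gC z) z := by
  set R : ℝ := ‖z‖ + 1 with hR
  have hR0 : (0:ℝ) < R := by positivity
  have hS : HasDerivAt
      (fun y : ℂ => ∑' n : ℕ,
        ((-1 : ℂ) ^ n / (((2 * n + 1 : ℕ) : ℂ) * 2 ^ n * (n.factorial : ℂ))) * y ^ (2 * n + 1))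
      (∑' n : ℕ, ((-1 : ℂ) ^ n / (2 ^ n * (n.factorial : ℂ))) * z ^ (2 * n)) z := by
    apply hasDerivAt_tsum_of_isPreconnected
      (u := fun n : ℕ => (R ^ 2 / 2) ^ n / (n.factorial : ℝ))
      (t := Metric.ball (0:ℂ) R) (y₀ := 0)
      (g' := fun (n : ℕ) (y : ℂ) => ((-1 : ℂ) ^ n / (2 ^ n * (n.factorial : ℂ))) * y ^ (2 * n))
    · exact Real.summable_pow_div_factorial _
    · exact Metric.isOpen_ball
    · exact (convex_ball _ _).isPreconnected
    · intro n y _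
      have h := (hasDerivAt_pow (2 * n + 1) y).const_mul
        ((-1 : ℂ) ^ n / (((2 * n + 1 : ℕ) : ℂ) * 2 ^ n * (n.factorial : ℂ)))
      refine h.congr_deriv ?_
      have h1 : ((2 * n + 1 : ℕ) : ℂ) ≠ 0 := Nat.cast_ne_zero.2 (by omega)
      have h2 : ((2 : ℂ)) ^ n ≠ 0 := pow_ne_zero _ two_ne_zero
      have hf : ((n.factorial : ℂ)) ≠ 0 := Nat.cast_ne_zero.2 n.factorial_ne_zero
      have he : 2 * n + 1 - 1 = 2 * n := by omega
      rw [he]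
      generalize hk : ((2 * n + 1 : ℕ) : ℂ) = k at h1 ⊢
      field_simp
    · intro n y hy
      have hy' : ‖y‖ ≤ R := le_of_lt (by simpa using hy)
      have hnorm : ‖((-1 : ℂ) ^ n / (2 ^ n * (n.factorial : ℂ))) * y ^ (2 * n)‖
          = ‖y‖ ^ (2 * n) / (2 ^ n * (n.factorial : ℝ)) := by
        simp [norm_div, norm_mul, norm_pow]
        ring
      rw [hnorm]
      have heq : (R ^ 2 / 2) ^ n / (n.factorial : ℝ) = R ^ (2 * n) / (2 ^ n * (n.factorial : ℝ)) := by
        rw [div_pow, pow_mul]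
        field_simp
      rw [heq]
      apply div_le_div_of_nonneg_right ?_ (by positivity)
      · exact pow_le_pow_left₀ (norm_nonneg _) hy' _
    · exact Metric.mem_ball_self hR0
    · simpa using summable_zero
    · rw [Metric.mem_ball, dist_zero_right, hR]
      exact lt_add_one _
  rw [tsum_gprime] at hS
  have := (hS.const_mul ((Real.sqrt (2 * π) : ℂ)⁻¹)).const_add (1/2 : ℂ)
  exact this

-- duplicate removed

lemma horiz (z : ℂ) (a b : ℝ) :
    PhiC (z + b) - PhiC (z + a) = ∫ t in a..b, gC (z + t) := by
  symm
  apply intervalIntegral.integral_eq_sub_of_hasDerivAt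
  · intro t _
    have h1 : HasDerivAt (fun w : ℂ => PhiC (z + w)) (gC (z + t)) (t : ℂ) := by
      have := (hasDerivAt_PhiC (z + t)).comp (t : ℂ) ((hasDerivAt_id (t : ℂ)).const_add z)
      simp only [mul_one, one_mul] at this
      exact this
    exact h1.comp_ofReal
  · exact ((gC_cont.comp (continuous_const.add Complex.continuous_ofReal))).intervalIntegrable _ _

lemma vert (z : ℂ) (a b : ℝ) :
    PhiC (z + b * I) - PhiC (z + a * I) = ∫ t in a..b, gC (z + t * I) * I := by
  symm
  apply intervalIntegral.integral_eq_sub_of_hasDerivAt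
  · intro t _
    have h1 : HasDerivAt (fun w : ℂ => PhiC (z + w * I)) (gC (z + t * I) * I) (t : ℂ) := by
      have := (hasDerivAt_PhiC (z + t * I)).comp (t : ℂ)
        (((hasDerivAt_id (t : ℂ)).mul_const I).const_add z)
      simp only [mul_one, one_mul] at this
      exact this
    exact h1.comp_ofReal
  · exact ((gC_cont.comp (continuous_const.add
      (Complex.continuous_ofReal.mul continuous_const))).mul continuous_const).intervalIntegrable _ _

lemma sqrt2pi_pos : (0:ℝ) < Real.sqrt (2 * π) := Real.sqrt_pos.2 (by positivity)

lemma gC_real (t : ℝ) : gC t = (((Real.sqrt (2 * π))⁻¹ * Real.exp (-t ^ 2 / 2) : ℝ) : ℂ) := by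
  unfold gC
  push_cast
  norm_num

lemma gauss_integrable : IntegrableOn (fun t : ℝ => Real.exp (-t ^ 2 / 2)) (Set.Ioi 0) := by
  have h := integrable_exp_neg_mul_sq (by norm_num : (0:ℝ) < 1/2)
  have : (fun t : ℝ => Real.exp (-t ^ 2 / 2)) = fun t : ℝ => Real.exp (-(1/2) * t ^ 2) := by
    ext t; ring_nf
  rw [this]
  exact h.integrableOn

lemma gauss_Ioi : ∫ t in Set.Ioi (0:ℝ), Real.exp (-t ^ 2 / 2) = Real.sqrt (2 * π) / 2 := by
  have h := integral_gaussian_Ioi (1/2 : ℝ)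
  have e1 : (fun t : ℝ => Real.exp (-t ^ 2 / 2)) = fun t : ℝ => Real.exp (-(1/2) * t ^ 2) := by
    ext t; ring_nf
  rw [e1, h]
  rw [show π / (1/2 : ℝ) = 2 * π by ring]

lemma gC_integrableOn : IntegrableOn (fun t : ℝ => gC t) (Set.Ioi 0) := by
  simp_rw [gC_real]
  exact (gauss_integrable.const_mul _).ofReal

lemma gC_Ioi : ∫ t in Set.Ioi (0:ℝ), gC t = 1 / 2 := by
  simp_rw [gC_real]
  have h1 : ∫ t in Set.Ioi (0:ℝ), (((Real.sqrt (2*π))⁻¹ * Real.exp (-t^2/2) : ℝ) : ℂ)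
      = ((∫ t in Set.Ioi (0:ℝ), (Real.sqrt (2*π))⁻¹ * Real.exp (-t^2/2) : ℝ) : ℂ) :=
    _root_.integral_ofReal
  rw [h1, MeasureTheory.integral_const_mul, gauss_Ioi]
  have h : (Real.sqrt (2*π))⁻¹ * (Real.sqrt (2*π) / 2) = 1/2 := by
    field_simp
  rw [h]
  norm_num

lemma PhiC_zero : PhiC 0 = 1 / 2 := by
  unfold PhiC
  have h : ∀ n : ℕ, ((-1 : ℂ) ^ n / (((2 * n + 1 : ℕ) : ℂ) * 2 ^ n * (n.factorial : ℂ)))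
      * (0:ℂ) ^ (2 * n + 1) = 0 := by
    intro n
    rw [zero_pow (by omega), mul_zero]
  simp [h]

lemma norm_gC (w : ℂ) : ‖gC w‖ = (Real.sqrt (2 * π))⁻¹ * Real.exp (-(w ^ 2).re / 2) := by
  unfold gC
  rw [norm_mul, Complex.norm_exp]
  congr 1
  · rw [norm_inv, Complex.norm_real, Real.norm_eq_abs, _root_.abs_of_nonneg sqrt2pi_pos.le]
  · rw [show (-w ^ 2 / 2 : ℂ) = -(w ^ 2) / 2 by ring, Complex.div_ofNat_re, Complex.neg_re]

lemma tendsto_PhiC_real : Tendsto (fun x : ℝ => PhiC x) atTop (𝓝 1) := by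
  have h1 : ∀ x : ℝ, PhiC x = 1 / 2 + ∫ t in (0:ℝ)..x, gC t := by
    intro x
    have := horiz 0 0 x
    simp only [zero_add, Complex.ofReal_zero] at this
    rw [PhiC_zero] at this
    linear_combination this
  have h2 : Tendsto (fun x : ℝ => ∫ t in (0:ℝ)..x, gC t) atTop (𝓝 (1/2 : ℂ)) := by
    have := MeasureTheory.intervalIntegral_tendsto_integral_Ioi 0 gC_integrableOn tendsto_id
    rwa [gC_Ioi] at this
  have h3 := h2.const_add (1/2 : ℂ)
  norm_num at h3
  simp_rw [h1]
  norm_num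
  exact h3

lemma tendsto_PhiC (z : ℂ) : Tendsto (fun T : ℝ => PhiC (z + T)) atTop (𝓝 1) := by
  set x := z.re; set y := z.im
  have hz : ∀ T : ℝ, z + T = (((x + T : ℝ)) : ℂ) + y * I := by
    intro T
    push_cast
    rw [← Complex.re_add_im z]
    simp only [x, y]; ring
  have hsplit : ∀ T : ℝ, PhiC (z + T)
      = PhiC ((x + T : ℝ)) + ∫ s in (0:ℝ)..y, gC (((x + T : ℝ) : ℂ) + s * I) * I := by
    intro T
    have := vert ((x + T : ℝ) : ℂ) 0 y
    simp only [Complex.ofReal_zero, zero_mul, add_zero] at this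
    rw [← hz T] at this
    linear_combination this
  have t1 : Tendsto (fun T : ℝ => PhiC ((x + T : ℝ))) atTop (𝓝 1) :=
    tendsto_PhiC_real.comp (tendsto_atTop_add_const_left atTop x tendsto_id)
  have t2 : Tendsto (fun T : ℝ => ∫ s in (0:ℝ)..y, gC (((x + T : ℝ) : ℂ) + s * I) * I)
      atTop (𝓝 0) := by
    apply squeeze_zero_norm (a := fun T : ℝ =>
      (Real.sqrt (2 * π))⁻¹ * Real.exp ((y ^ 2 - (x + T) ^ 2) / 2) * |y - 0|)
    · intro T
      apply intervalIntegral.norm_integral_le_of_norm_le_const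
      intro s hs
      have hs' : |s| ≤ |y| := by
        have h1 : min 0 y < s := hs.1
        have h2 : s ≤ max 0 y := hs.2
        have h3 : -|y| ≤ min 0 y := le_min (neg_nonpos.2 (abs_nonneg y)) (neg_abs_le y)
        have h4 : max 0 y ≤ |y| := max_le (abs_nonneg y) (le_abs_self y)
        rw [abs_le]
        constructor <;> linarith
      rw [norm_mul, Complex.norm_I, mul_one, norm_gC]
      apply mul_le_mul_of_nonneg_left _ (by positivity)
      apply Real.exp_le_exp.2
      have hre : ((((x + T : ℝ) : ℂ) + s * I) ^ 2).re = (x + T) ^ 2 - s ^ 2 := by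
        simp [Complex.add_re, Complex.mul_re, Complex.I_re, Complex.I_im, pow_two]
        try ring
      rw [hre]
      have : s ^ 2 ≤ y ^ 2 := by
        rw [← _root_.sq_abs s, ← _root_.sq_abs y]
        exact pow_le_pow_left₀ (abs_nonneg s) hs' 2
      linarith
    · have hb : Tendsto (fun T : ℝ => (y ^ 2 - (x + T) ^ 2) / 2) atTop atBot := by
        apply Tendsto.atBot_div_const two_pos
        have h1 : Tendsto (fun T : ℝ => x + T) atTop atTop :=
          tendsto_atTop_add_const_left atTop x tendsto_id
        have h2 : Tendsto (fun T : ℝ => (x + T) ^ 2) atTop atTop :=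
          (tendsto_pow_atTop (two_ne_zero)).comp h1
        have h3 : Tendsto (fun T : ℝ => -(x + T) ^ 2) atTop atBot :=
          tendsto_neg_atTop_atBot.comp h2
        have h4 := tendsto_atBot_add_const_left atTop (y ^ 2) h3
        simpa [sub_eq_add_neg] using h4
      have h5 := ((Real.tendsto_exp_atBot.comp hb).const_mul
        ((Real.sqrt (2 * π))⁻¹)).mul_const |y - 0|
      simpa using h5
  have := t1.add t2
  rw [add_zero] at this
  apply this.congr
  intro T
  rw [← hsplit]

lemma key (z : ℂ) (hz : 0 ≤ z.re) :
    ‖1 - PhiC z‖ ≤ 1 / 2 * Real.exp (-(z ^ 2).re / 2) := by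
  set B : ℝ := 1 / 2 * Real.exp (-(z ^ 2).re / 2) with hB
  have hT : ∀ T : ℝ, 0 ≤ T → ‖PhiC (z + T) - PhiC z‖ ≤ B := by
    intro T hT0
    have heq : PhiC (z + T) - PhiC z = ∫ t in (0:ℝ)..T, gC (z + t) := by
      have := horiz z 0 T
      simpa using this
    rw [heq]
    have hle1 : ‖∫ t in (0:ℝ)..T, gC (z + t)‖
        ≤ ∫ t in (0:ℝ)..T, ‖gC (z + t)‖ :=
      intervalIntegral.norm_integral_le_integral_norm hT0
    have hptw : ∀ t ∈ Set.Icc (0:ℝ) T, ‖gC (z + t)‖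
        ≤ (Real.sqrt (2 * π))⁻¹ * Real.exp (-(z ^ 2).re / 2) * Real.exp (-t ^ 2 / 2) := by
      intro t ht
      rw [norm_gC, mul_assoc, ← Real.exp_add]
      apply mul_le_mul_of_nonneg_left _ (by positivity)
      apply Real.exp_le_exp.2
      have hre : ((z + t) ^ 2).re = (z ^ 2).re + 2 * t * z.re + t ^ 2 := by
        simp [add_sq, Complex.add_re, Complex.mul_re, Complex.ofReal_re, Complex.ofReal_im,
          Complex.mul_im, pow_two]
        ring
      rw [hre]
      have h0 : 0 ≤ 2 * t * z.re := mul_nonneg (mul_nonneg two_pos.le ht.1) hz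
      linarith
    have hle2 : ∫ t in (0:ℝ)..T, ‖gC (z + t)‖
        ≤ ∫ t in (0:ℝ)..T,
          (Real.sqrt (2 * π))⁻¹ * Real.exp (-(z ^ 2).re / 2) * Real.exp (-t ^ 2 / 2) := by
      apply intervalIntegral.integral_mono_on hT0
      · exact ((gC_cont.comp (continuous_const.add Complex.continuous_ofReal)).norm).intervalIntegrable _ _
      · apply Continuous.intervalIntegrable
        fun_prop
      · exact hptw
    have hle3 : ∫ t in (0:ℝ)..T,
          (Real.sqrt (2 * π))⁻¹ * Real.exp (-(z ^ 2).re / 2) * Real.exp (-t ^ 2 / 2)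
        ≤ (Real.sqrt (2 * π))⁻¹ * Real.exp (-(z ^ 2).re / 2) * (Real.sqrt (2 * π) / 2) := by
      rw [intervalIntegral.integral_const_mul]
      apply mul_le_mul_of_nonneg_left _ (by positivity)
      rw [intervalIntegral.integral_of_le hT0, ← gauss_Ioi]
      exact setIntegral_mono_set gauss_integrable
        (by filter_upwards with t using (Real.exp_pos _).le)
        (HasSubset.Subset.eventuallyLE Set.Ioc_subset_Ioi_self)
    have : (Real.sqrt (2 * π))⁻¹ * Real.exp (-(z ^ 2).re / 2) * (Real.sqrt (2 * π) / 2) = B := by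
      rw [hB]
      field_simp
    linarith
  have hlim : Tendsto (fun T : ℝ => ‖PhiC (z + T) - PhiC z‖) atTop (𝓝 ‖1 - PhiC z‖) :=
    (((tendsto_PhiC z).sub_const (PhiC z)).norm)
  apply le_of_tendsto hlim
  filter_upwards [eventually_ge_atTop 0] with T hT0 using hT T hT0

lemma PhiC_neg (z : ℂ) : PhiC (-z) = 1 - PhiC z := by
  unfold PhiC
  have h : ∀ n : ℕ, ((-1 : ℂ) ^ n / (((2 * n + 1 : ℕ) : ℂ) * 2 ^ n * (n.factorial : ℂ)))
      * (-z) ^ (2 * n + 1)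
      = -(((-1 : ℂ) ^ n / (((2 * n + 1 : ℕ) : ℂ) * 2 ^ n * (n.factorial : ℂ))) * z ^ (2 * n + 1)) := by
    intro n
    rw [(odd_two_mul_add_one n).neg_pow, mul_neg]
  simp_rw [h]
  rw [tsum_neg]
  ring

/-- There exists `C > 0` with `‖Φ(z)‖ ≤ C max{1, e^{-Re(z²)/2}}` for all `z ∈ ℂ`. -/
theorem PhiC_bound :
    ∃ C : ℝ, 0 < C ∧ ∀ z : ℂ,
      ‖PhiC z‖ ≤ C * max 1 (Real.exp (-(z ^ 2).re / 2)) := by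
  refine ⟨2, two_pos, fun z => ?_⟩
  have hmax1 : (1:ℝ) ≤ max 1 (Real.exp (-(z ^ 2).re / 2)) := le_max_left _ _
  have hmax2 : Real.exp (-(z ^ 2).re / 2) ≤ max 1 (Real.exp (-(z ^ 2).re / 2)) := le_max_right _ _
  rcases le_or_gt 0 z.re with hz | hz
  · have h := key z hz
    have : ‖PhiC z‖ ≤ 1 + 1 / 2 * Real.exp (-(z ^ 2).re / 2) := by
      calc ‖PhiC z‖ = ‖(1 : ℂ) - (1 - PhiC z)‖ := by rw [sub_sub_cancel]
        _ ≤ ‖(1:ℂ)‖ + ‖1 - PhiC z‖ := norm_sub_le _ _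
        _ ≤ 1 + 1 / 2 * Real.exp (-(z ^ 2).re / 2) := by rw [norm_one]; linarith
    nlinarith
  · have h := key (-z) (by simpa using hz.le)
    rw [PhiC_neg] at h
    have he : ((-z) ^ 2).re = (z ^ 2).re := by rw [neg_sq]
    rw [he] at h
    rw [show (1 : ℂ) - (1 - PhiC z) = PhiC z by ring] at h
    nlinarith
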